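/- Let D(σ, N) = D_min + (a/σ)^α + (b/N)^β with a, b, α, β > 0, D_min ≥ 0, α < 1 or β < 1, and let (σ*(D₀), N*(D₀)) be the compute-optimal configuration for data budget D₀ > D_min. Then the compute at the optimum, C*(D₀) = k σ*(D₀) N*(D₀) D₀, satisfies C*(D₀) = k a b (1+α/β)^{1/α} (1+β/α)^{1/β} · D₀ · (D₀ − D_min)^{−1/α − 1/β}; in particular, if 1/α + 1/β > 1, then C*(D₀) → ∞ as D₀ → D_min⁺. -/

import Mathlib

open Real Filter

theorem stmt_12 (a b α β k Dmin : ℝ)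
    (ha : 0 < a) (hb : 0 < b) (hα : 0 < α) (hβ : 0 < β) (hk : 0 < k)
    (hDmin : 0 ≤ Dmin) (hαβ : α < 1 ∨ β < 1)
    (σs Ns Cs : ℝ → ℝ)
    (hσs : ∀ D₀, σs D₀ = a * ((1 + α / β) / (D₀ - Dmin)) ^ (1 / α))
    (hNs : ∀ D₀, Ns D₀ = b * ((1 + β / α) / (D₀ - Dmin)) ^ (1 / β))
    (hCs : ∀ D₀, Cs D₀ = k * σs D₀ * Ns D₀ * D₀) :
    (∀ D₀, Dmin < D₀ →
        Cs D₀ = k * a * b * (1 + α / β) ^ (1 / α) * (1 + β / α) ^ (1 / β) *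
          D₀ * (D₀ - Dmin) ^ (-(1 / α) - 1 / β)) ∧
    (1 < 1 / α + 1 / β →
        Tendsto Cs (nhdsWithin Dmin (Set.Ioi Dmin)) atTop) := by
  have hA : (0:ℝ) < 1 + α / β := by positivity
  have hB : (0:ℝ) < 1 + β / α := by positivity
  have key : ∀ D₀, Dmin < D₀ →
      Cs D₀ = k * a * b * (1 + α / β) ^ (1 / α) * (1 + β / α) ^ (1 / β) *
        D₀ * (D₀ - Dmin) ^ (-(1 / α) - 1 / β) := by
    intro D₀ hD
    have hx : (0:ℝ) < D₀ - Dmin := by linarith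
    rw [hCs, hσs, hNs]
    rw [Real.div_rpow hA.le hx.le, Real.div_rpow hB.le hx.le,
      Real.rpow_sub hx, Real.rpow_neg hx.le]
    field_simp
  refine ⟨key, ?_⟩
  intro hp
  set K : ℝ := k * a * b * (1 + α / β) ^ (1 / α) * (1 + β / α) ^ (1 / β) with hK
  have hKpos : 0 < K := by positivity
  have hlim : Tendsto (fun D₀ => K * (D₀ - Dmin) ^ (1 - (1 / α + 1 / β)))
      (nhdsWithin Dmin (Set.Ioi Dmin)) atTop := by
    have h1 : Tendsto (fun D₀ => D₀ - Dmin) (nhdsWithin Dmin (Set.Ioi Dmin))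
        (nhdsWithin 0 (Set.Ioi 0)) := by
      apply tendsto_nhdsWithin_of_tendsto_nhds_of_eventually_within
      · have hc : Tendsto (fun D₀ : ℝ => D₀ - Dmin) (nhds Dmin) (nhds (Dmin - Dmin)) :=
          ((continuous_id (X := ℝ)).sub continuous_const).tendsto Dmin
        simpa using hc.mono_left nhdsWithin_le_nhds
      · filter_upwards [self_mem_nhdsWithin] with x hx
        simpa using sub_pos.mpr (Set.mem_Ioi.mp hx)
    have h2 : Tendsto (fun x : ℝ => x ^ (1 - (1 / α + 1 / β)))
        (nhdsWithin 0 (Set.Ioi 0)) atTop := by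
      have h3 : Tendsto (fun y : ℝ => y ^ (1 / α + 1 / β - 1)) atTop atTop :=
        tendsto_rpow_atTop (by linarith)
      have h4 := (h3.comp tendsto_inv_nhdsGT_zero)
      apply h4.congr'
      filter_upwards [self_mem_nhdsWithin] with x hx
      have hx0 : (0:ℝ) < x := hx
      simp only [Function.comp]
      rw [← Real.rpow_neg_one x, ← Real.rpow_mul hx0.le]
      congr 1
      ring
    exact (h2.comp h1).const_mul_atTop hKpos
  apply tendsto_atTop_mono' _ _ hlim
  filter_upwards [self_mem_nhdsWithin] with D₀ hD
  have hD' : Dmin < D₀ := hD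
  have hx : (0:ℝ) < D₀ - Dmin := by linarith
  rw [key D₀ hD']
  have hxe : (D₀ - Dmin) ^ (1 - (1 / α + 1 / β)) =
      (D₀ - Dmin) * (D₀ - Dmin) ^ (-(1 / α) - 1 / β) := by
    rw [show (1 : ℝ) - (1 / α + 1 / β) = 1 + (-(1 / α) - 1 / β) by ring,
      Real.rpow_one_add' hx.le (by intro h; linarith)]
  rw [hxe]
  have hDge : D₀ - Dmin ≤ D₀ := by linarith
  have hpow : (0:ℝ) < (D₀ - Dmin) ^ (-(1 / α) - 1 / β) := Real.rpow_pos_of_pos hx _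
  calc K * ((D₀ - Dmin) * (D₀ - Dmin) ^ (-(1 / α) - 1 / β))
      ≤ K * (D₀ * (D₀ - Dmin) ^ (-(1 / α) - 1 / β)) := by
        apply mul_le_mul_of_nonneg_left _ hKpos.le
        exact mul_le_mul_of_nonneg_right hDge hpow.le
    _ = K * D₀ * (D₀ - Dmin) ^ (-(1 / α) - 1 / β) := by ring
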